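/- For nonnegative integers n, k with 0 ≤ k ≤ n, the Stirling number of the second kind satisfies S2(n,k) = (-1)^{n-k} · Σ_{j=0}^{n-k} (-1)^j · C(n-1+j, n-k+j) · C(2n-k, n-k-j) · S1(n-k+j, j), where S1 denotes the unsigned Stirling number of the first kind. -/

import Mathlib

/-- Unsigned Stirling numbers of the first kind. -/
def S1 : ℕ → ℕ → ℕ
  | 0, 0 => 1
  | 0, _ + 1 => 0
  | _ + 1, 0 => 0
  | n + 1, k + 1 => n * S1 n (k + 1) + S1 n k

/-- Stirling numbers of the second kind. -/
def S2 : ℕ → ℕ → ℕ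
  | 0, 0 => 1
  | 0, _ + 1 => 0
  | _ + 1, 0 => 0
  | n + 1, k + 1 => (k + 1) * S2 n (k + 1) + S2 n k

lemma S1_eq_zero : ∀ n k, n < k → S1 n k = 0
  | 0, _ + 1, _ => rfl
  | n + 1, k + 1, h => by
    rw [S1, S1_eq_zero n (k+1) (by omega), S1_eq_zero n k (by omega)]; ring

lemma S2_eq_zero : ∀ n k, n < k → S2 n k = 0
  | 0, _ + 1, _ => rfl
  | n + 1, k + 1, h => by
    rw [S2, S2_eq_zero n (k+1) (by omega), S2_eq_zero n k (by omega)]; ring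

lemma S1_self : ∀ n, S1 n n = 1
  | 0 => rfl
  | n + 1 => by
    rw [S1, S1_self n, S1_eq_zero n (n+1) (by omega)]; ring

lemma S2_self : ∀ n, S2 n n = 1
  | 0 => rfl
  | n + 1 => by
    rw [S2, S2_self n, S2_eq_zero n (n+1) (by omega)]; ring

lemma S1_zero (n : ℕ) : S1 (n + 1) 0 = 0 := rfl
lemma S2_zero (n : ℕ) : S2 (n + 1) 0 = 0 := rfl

/-- signed discrete integral from 0 -/
def sInt (f : ℤ → ℚ) (x : ℤ) : ℚ :=
  if 0 ≤ x then ∑ t ∈ Finset.range x.toNat, f t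
  else -∑ t ∈ Finset.range (-x).toNat, f (-(t + 1))

lemma sInt_zero (f : ℤ → ℚ) : sInt f 0 = 0 := by simp [sInt]

lemma sInt_succ (f : ℤ → ℚ) (x : ℤ) : sInt f (x + 1) = sInt f x + f x := by
  rcases le_or_gt 0 x with h | h
  · have h1 : (0:ℤ) ≤ x + 1 := by omega
    have h2 : (x+1).toNat = x.toNat + 1 := by omega
    rw [sInt, sInt, if_pos h1, if_pos h, h2, Finset.sum_range_succ]
    congr 2
    omega
  · rcases eq_or_lt_of_le (show x ≤ -1 by omega) with h1 | h1
    · subst h1; simp [sInt]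
    · have h2 : ¬ (0:ℤ) ≤ x + 1 := by omega
      have h3 : ¬ (0:ℤ) ≤ x := by omega
      have h4 : (-x).toNat = (-(x+1)).toNat + 1 := by omega
      rw [sInt, sInt, if_neg h2, if_neg h3, h4, Finset.sum_range_succ]
      have : (-(((-(x+1)).toNat : ℤ) + 1)) = x := by omega
      rw [this]; ring

def g : ℕ → ℤ → ℚ
  | 0 => fun _ => 1
  | m + 1 => sInt fun t => t * g m t

lemma g_zero (x : ℤ) : g 0 x = 1 := rfl
lemma g_succ_zero (m : ℕ) : g (m + 1) 0 = 0 := sInt_zero _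
lemma g_succ (m : ℕ) (x : ℤ) : g (m + 1) (x + 1) = g (m + 1) x + x * g m x :=
  sInt_succ _ x

lemma g_nat_lt : ∀ m n : ℕ, n < m → g m n = 0 := by
  intro m
  induction m with
  | zero => omega
  | succ m ih =>
    intro n
    induction n with
    | zero => intro _; exact g_succ_zero m
    | succ n ihn =>
      intro h
      have : ((n:ℤ) + 1) = ((n+1 : ℕ) : ℤ) := by push_cast; ring
      rw [← this, g_succ, ihn (by omega), ih n (by omega)]
      ring

lemma g_eq_S1 : ∀ n m : ℕ, m ≤ n → g m n = S1 n (n - m) := by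
  intro n
  induction n with
  | zero => intro m h; interval_cases m; simp [g_zero, S1]
  | succ n ih =>
    intro m h
    match m with
    | 0 => rw [g_zero]; rw [Nat.sub_zero, S1_self]; norm_num
    | m + 1 =>
      have hc : ((n:ℤ) + 1) = ((n+1 : ℕ) : ℤ) := by push_cast; ring
      rw [← hc, g_succ]
      rcases Nat.lt_or_ge m n with hm | hm
      · -- m + 1 ≤ n
        rw [ih (m+1) (by omega), ih m (by omega)]
        have h1 : n + 1 - (m + 1) = (n - (m+1)) + 1 := by omega
        rw [h1, S1]
        have h2 : n - (m + 1) + 1 = n - m := by omega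
        rw [h2]
        push_cast
        ring
      · -- m = n, target S1 (n+1) 0 = 0
        have hmn : m = n := by omega
        rw [hmn, g_nat_lt (n+1) n (by omega), ih n le_rfl, Nat.sub_self,
            show n+1-(n+1) = 0 by omega, S1_zero]
        cases n with
        | zero => simp [S1]
        | succ p => rw [S1_zero]; push_cast; ring

lemma g_eq_S2 : ∀ n m : ℕ, m ≤ n → g m ((m : ℤ) - n) = S2 n (n - m) := by
  intro n
  induction n with
  | zero => intro m h; interval_cases m; simp [g_zero, S2]
  | succ n ih =>
    intro m h
    match m with
    | 0 => rw [g_zero]; rw [Nat.sub_zero, S2_self]; norm_num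
    | m + 1 =>
      rcases Nat.lt_or_ge m n with hm | hm
      · -- m + 1 ≤ n : use g_succ at x = m - n
        have key := g_succ m ((m : ℤ) - n)
        have hx : ((m:ℤ) - n) + 1 = ((m+1 : ℤ)) - n := by ring
        rw [hx] at key
        have e1 : g (m+1) (((m:ℤ)+1) - (n:ℤ)) = g (m+1) (((m+1:ℕ):ℤ) - n) := by push_cast; ring_nf
        rw [e1] at key
        rw [ih (m+1) (by omega), ih m (by omega)] at key
        have h1 : n + 1 - (m + 1) = (n - (m+1)) + 1 := by omega
        rw [h1, S2]
        have h2 : n - (m + 1) + 1 = n - m := by omega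
        rw [h2]
        have e2 : g (m+1) (((m+1:ℕ):ℤ) - (n+1:ℕ)) = g (m+1) ((m:ℤ) - n) := by push_cast; ring_nf
        rw [e2]
        push_cast [Nat.cast_sub (show m ≤ n by omega)] at key ⊢
        linarith
      · -- m = n
        have hmn : m = n := by omega
        rw [hmn, show ((n+1:ℕ):ℤ) - ((n+1:ℕ):ℤ) = 0 by ring, g_succ_zero,
            show n+1-(n+1) = 0 by omega, S2_zero]
        simp

/-- forward difference -/
def dd (f : ℤ → ℚ) (x : ℤ) : ℚ := f (x + 1) - f x

lemma dd_g (m : ℕ) (x : ℤ) : dd (g (m + 1)) x = x * g m x := by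
  rw [dd, g_succ]; ring

lemma eq_of_dd_eq (a b : ℤ → ℚ) (h0 : a 0 = b 0)
    (h : ∀ x, dd a x = dd b x) : ∀ x, a x = b x := by
  intro x
  induction x using Int.induction_on with
  | zero => exact h0
  | succ i ih =>
    have := h i
    rw [dd, dd] at this
    push_cast at this ⊢
    linarith
  | pred i ih =>
    have := h (-(i:ℤ) - 1)
    rw [dd, dd] at this
    have e : (-(i:ℤ) - 1) + 1 = -(i:ℤ) := by ring
    rw [e] at this
    push_cast at this ⊢
    linarith

lemma dd_iter_succ (f : ℤ → ℚ) (r : ℕ) (x : ℤ) :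
    dd^[r + 1] f x = dd (dd^[r] f) x := by
  rw [Function.iterate_succ_apply']

lemma dd_iter_mul_X (f : ℤ → ℚ) : ∀ r : ℕ, ∀ x : ℤ,
    dd^[r + 1] (fun y => y * f y) x
      = (x + r + 1) * dd^[r + 1] f x + (r + 1) * dd^[r] f x := by
  intro r
  induction r with
  | zero =>
    intro x
    have h1 : ∀ (h : ℤ → ℚ) (y : ℤ), dd^[0+1] h y = dd h y := fun _ _ => rfl
    rw [h1, h1]
    simp only [Function.iterate_zero, id_eq, dd]
    push_cast
    ring
  | succ r ih =>
    intro x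
    have hL : dd^[r+1+1] (fun y => (y:ℚ) * f y) x
        = (dd^[r+1] fun y => (y:ℚ) * f y) (x+1) - (dd^[r+1] fun y => (y:ℚ) * f y) x := by
      rw [dd_iter_succ]; rfl
    rw [hL, ih (x+1), ih x]
    have hA : dd^[r+1+1] f x = dd^[r+1] f (x+1) - dd^[r+1] f x := by
      rw [dd_iter_succ]; rfl
    have hB : dd^[r+1] f x = dd^[r] f (x+1) - dd^[r] f x := by
      rw [dd_iter_succ]; rfl
    rw [hA]
    push_cast
    linear_combination (-(r:ℚ)-1) * hB

lemma dd_iter_g (m : ℕ) : ∀ x : ℤ, dd^[2 * m + 1] (g m) x = 0 := by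
  induction m with
  | zero =>
    intro x
    simp only [Nat.mul_zero, Nat.zero_add, Function.iterate_one, dd, g_zero, sub_self]
  | succ m ih =>
    intro x
    have h1 : dd^[2 * (m+1) + 1] (g (m+1)) x = dd^[2*m + 2] (dd (g (m+1))) x := by
      rw [show 2*(m+1)+1 = 2*m+2+1 by omega, Function.iterate_succ_apply]
    rw [h1]
    have h2 : dd (g (m+1)) = fun y => y * g m y := by
      funext y; exact dd_g m y
    rw [h2]
    have h3 := dd_iter_mul_X (g m) (2*m + 1) x
    have e : 2*m + 1 + 1 = 2*m + 2 := rfl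
    rw [e] at h3
    rw [h3]
    have z1 : dd^[2*m+1] (g m) x = 0 := ih x
    have z2 : dd^[2*m+2] (g m) x = 0 := by
      rw [dd_iter_succ, dd, ih (x+1), ih x]; ring
    rw [z1, z2]
    ring

/-- rational binomial coefficient -/
def bq (x : ℤ) (i : ℕ) : ℚ := (∏ t ∈ Finset.range i, ((x : ℚ) - t)) / i.factorial

lemma bq_zero (x : ℤ) : bq x 0 = 1 := by simp [bq]

lemma bq_pascal (x : ℤ) (i : ℕ) : bq (x + 1) (i + 1) = bq x (i + 1) + bq x i := by
  have hp1 : (∏ t ∈ Finset.range (i+1), (((x+1 : ℤ) : ℚ) - t))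
      = ((x:ℚ) + 1) * ∏ t ∈ Finset.range i, ((x:ℚ) - t) := by
    rw [Finset.prod_range_succ']
    have h1 : ∀ t ∈ Finset.range i, (((x+1:ℤ):ℚ) - ((t+1:ℕ):ℚ)) = ((x:ℚ) - (t:ℚ)) := by
      intro t _; push_cast; ring
    rw [Finset.prod_congr rfl h1]
    push_cast
    ring
  have hp2 : (∏ t ∈ Finset.range (i+1), ((x : ℚ) - t))
      = (∏ t ∈ Finset.range i, ((x:ℚ) - t)) * ((x:ℚ) - i) := Finset.prod_range_succ _ _
  rw [bq, bq, bq, hp1, hp2, Nat.factorial_succ]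
  have hf : (i.factorial : ℚ) ≠ 0 := by positivity
  have hf2 : ((i+1 : ℕ) : ℚ) ≠ 0 := by positivity
  field_simp
  push_cast
  ring

lemma dd_bq (i : ℕ) (x : ℤ) : dd (fun y => bq y (i + 1)) x = bq x i := by
  rw [dd, bq_pascal]; ring

lemma bq_nat_zero (i : ℕ) : bq 0 (i + 1) = 0 := by
  rw [bq]
  rw [Finset.prod_range_succ']
  simp

/-- Newton expansion -/
lemma newton : ∀ (D : ℕ) (a : ℤ → ℚ), (∀ x, dd^[D] a x = 0) →
    ∀ x, a x = ∑ i ∈ Finset.range D, dd^[i] a 0 * bq x i := by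
  intro D
  induction D with
  | zero => intro a h x; simpa using h x
  | succ D ih =>
    intro a h x
    have hb : ∀ x, dd^[D] (dd a) x = 0 := by
      intro y
      rw [← Function.iterate_succ_apply]
      exact h y
    have hdd := ih (dd a) hb
    -- show a x = h x via eq_of_dd_eq
    refine eq_of_dd_eq a (fun y => ∑ i ∈ Finset.range (D+1), dd^[i] a 0 * bq y i) ?_ ?_ x
    · show a 0 = ∑ i ∈ Finset.range (D+1), dd^[i] a 0 * bq 0 i
      rw [Finset.sum_range_succ']
      simp [bq_zero, bq_nat_zero]
    · intro y
      have hR : dd (fun y => ∑ i ∈ Finset.range (D+1), dd^[i] a 0 * bq y i) y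
          = ∑ i ∈ Finset.range (D+1), dd^[i] a 0 * (bq (y+1) i - bq y i) := by
        rw [dd, ← Finset.sum_sub_distrib]
        apply Finset.sum_congr rfl
        intro i _
        ring
      rw [hR]
      rw [Finset.sum_range_succ']
      have e0 : dd^[0] a 0 * (bq (y+1) 0 - bq y 0) = 0 := by
        rw [bq_zero, bq_zero]; ring
      rw [e0, add_zero]
      have e1 : ∀ i ∈ Finset.range D, dd^[i+1] a 0 * (bq (y+1) (i+1) - bq y (i+1))
          = dd^[i] (dd a) 0 * bq y i := by
        intro i _
        rw [bq_pascal]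
        rw [← Function.iterate_succ_apply]
        ring
      rw [Finset.sum_congr rfl e1]
      exact hdd y

lemma dd_iter_vanish (p : ℕ) : ∀ (i : ℕ) (a : ℤ → ℚ),
    (∀ r : ℕ, r ≤ i + p → a r = 0) → ∀ q : ℕ, q ≤ p → dd^[i] a q = 0 := by
  intro i
  induction i with
  | zero => intro a h q hq; exact h q (by omega)
  | succ i ih =>
    intro a h q hq
    rw [Function.iterate_succ_apply]
    apply ih (dd a) _ q hq
    intro r hr
    rw [dd]
    have e : ((r:ℤ) + 1) = ((r+1:ℕ):ℤ) := by push_cast; ring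
    rw [e, h (r+1) (by omega), h r (by omega)]
    ring

lemma prod_desc : ∀ (i c : ℕ), i ≤ c →
    (∏ t ∈ Finset.range i, ((c:ℚ) - t)) * (c - i).factorial = c.factorial := by
  intro i
  induction i with
  | zero => intro c _; simp
  | succ i ih =>
    intro c hc
    rw [Finset.prod_range_succ]
    have h1 : c - i = (c - (i+1)) + 1 := by omega
    have h2 : ((c:ℚ) - i) = ((c - i : ℕ) : ℚ) := by
      push_cast [Nat.cast_sub (by omega : i ≤ c)]; ring
    calc (∏ t ∈ Finset.range i, ((c:ℚ) - t)) * ((c:ℚ) - i) * (c - (i+1)).factorial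
        = (∏ t ∈ Finset.range i, ((c:ℚ) - t)) * (((c - i:ℕ):ℚ) * (c - (i+1)).factorial) := by
          rw [← h2]; ring
      _ = (∏ t ∈ Finset.range i, ((c:ℚ) - t)) * (c - i).factorial := by
          have h3 : (c - i).factorial = (c - i) * (c - (i+1)).factorial := by
            rw [h1, Nat.factorial_succ, ← h1]
          rw [h3]
          push_cast
          ring
      _ = c.factorial := ih c (by omega)

lemma bq_natCast (c i : ℕ) : bq (c : ℤ) i = (c.choose i : ℚ) := by
  rcases Nat.lt_or_ge c i with h | h
  · have hz : (∏ t ∈ Finset.range i, (((c:ℤ):ℚ) - t)) = 0 := by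
      apply Finset.prod_eq_zero (Finset.mem_range.mpr h)
      push_cast
      ring
    rw [bq, hz, Nat.choose_eq_zero_of_lt h]
    simp
  · have := prod_desc i c h
    have hf : ((c-i).factorial : ℚ) ≠ 0 := by positivity
    have hf2 : (i.factorial : ℚ) ≠ 0 := by positivity
    have hcc : ∀ t ∈ Finset.range i, (((c:ℤ):ℚ) - (t:ℚ)) = ((c:ℚ) - (t:ℚ)) := by
      intro t _; push_cast; ring
    rw [bq, Finset.prod_congr rfl hcc, Nat.cast_choose ℚ h,
      div_eq_div_iff hf2 (mul_ne_zero hf2 hf)]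
    linear_combination (i.factorial : ℚ) * this

lemma prod_asc : ∀ (i d : ℕ),
    (∏ t ∈ Finset.range i, ((d:ℚ) + 1 + t)) * d.factorial = (d + i).factorial := by
  intro i
  induction i with
  | zero => intro d; simp
  | succ i ih =>
    intro d
    rw [Finset.prod_range_succ]
    have : d + (i+1) = (d + i) + 1 := by omega
    rw [this, Nat.factorial_succ]
    push_cast
    calc (∏ t ∈ Finset.range i, ((d:ℚ) + 1 + t)) * ((d:ℚ) + 1 + i) * d.factorial
        = ((∏ t ∈ Finset.range i, ((d:ℚ) + 1 + t)) * d.factorial) * ((d:ℚ) + 1 + i) := by ring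
      _ = ((d+i).factorial : ℚ) * ((d:ℚ) + 1 + i) := by rw [ih d]
      _ = ((d:ℚ) + i + 1) * (d+i).factorial := by ring

lemma bq_neg (d i : ℕ) : bq (-(d : ℤ) - 1) i = (-1:ℚ)^i * ((d + i).choose i : ℚ) := by
  have hp : (∏ t ∈ Finset.range i, ((((-(d:ℤ) - 1) : ℤ):ℚ) - t))
      = (-1:ℚ)^i * ∏ t ∈ Finset.range i, ((d:ℚ) + 1 + t) := by
    have h1 : ∀ t ∈ Finset.range i, ((((-(d:ℤ) - 1) : ℤ):ℚ) - (t:ℚ))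
        = (-1) * ((d:ℚ) + 1 + t) := by
      intro t _; push_cast; ring
    rw [Finset.prod_congr rfl h1, Finset.prod_mul_distrib, Finset.prod_const,
      Finset.card_range]
  rw [bq, hp, Nat.cast_choose ℚ (by omega : i ≤ d + i)]
  have h1 : d + i - i = d := by omega
  rw [h1]
  have := prod_asc i d
  have hf : (d.factorial : ℚ) ≠ 0 := by positivity
  have hf2 : (i.factorial : ℚ) ≠ 0 := by positivity
  field_simp
  linear_combination this

/-- trinomial revision: C(a+t, t) C(t, i) = C(a+i, i) C(a+t, a+i) -/
lemma trinom (a t i : ℕ) :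
    (((a + t).choose t : ℚ)) * (t.choose i) = ((a + i).choose i) * ((a + t).choose (a + i)) := by
  rcases Nat.lt_or_ge t i with h | h
  · rw [Nat.choose_eq_zero_of_lt h, Nat.choose_eq_zero_of_lt (by omega : a + t < a + i)]
    ring
  · rw [Nat.cast_choose ℚ (by omega : t ≤ a + t), Nat.cast_choose ℚ h,
      Nat.cast_choose ℚ (by omega : i ≤ a + i), Nat.cast_choose ℚ (by omega : a + i ≤ a + t)]
    have e1 : a + t - t = a := by omega
    have e2 : a + i - i = a := by omega
    have e3 : a + t - (a + i) = t - i := by omega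
    rw [e1, e2, e3]
    have f1 : ((t.factorial : ℚ)) ≠ 0 := by positivity
    have f2 : ((a.factorial : ℚ)) ≠ 0 := by positivity
    have f3 : ((i.factorial : ℚ)) ≠ 0 := by positivity
    have f4 : (((t-i).factorial : ℚ)) ≠ 0 := by positivity
    have f5 : (((a+i).factorial : ℚ)) ≠ 0 := by positivity
    field_simp

/-- subset identity: C(N,s) C(N-s, S-s) = C(N,S) C(S,s) for s ≤ S ≤ N -/
lemma subset_id (N S s : ℕ) (hs : s ≤ S) (hS : S ≤ N) :
    ((N.choose s : ℚ)) * ((N - s).choose (S - s)) = (N.choose S) * (S.choose s) := by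
  rw [Nat.cast_choose ℚ (by omega : s ≤ N), Nat.cast_choose ℚ (by omega : S - s ≤ N - s),
    Nat.cast_choose ℚ hS, Nat.cast_choose ℚ hs]
  have e1 : N - s - (S - s) = N - S := by omega
  have e2 : S - s ≤ N - s := by omega
  rw [e1]
  have f1 : ∀ c : ℕ, ((c.factorial : ℚ)) ≠ 0 := fun c => by positivity
  field_simp

/-- the alternating sum (B) -/
lemma altsum (N : ℕ) : ∀ S : ℕ, S + 1 ≤ N →
    ∑ s ∈ Finset.range (S + 1),
      (-1:ℚ)^s * (N.choose s) * ((N - 1 - s).choose (N - 1 - S)) = (-1:ℚ)^S := by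
  intro S
  induction S with
  | zero =>
    intro h
    simp
  | succ S ih =>
    intro hS
    have pascal : ∀ s ∈ Finset.range (S+2),
        (((N - 1 - s).choose (N - 1 - (S+1))) : ℚ)
          = (((N - s).choose (N - 1 - S)) : ℚ) - (((N - 1 - s).choose (N - 1 - S)) : ℚ) := by
      intro s hs
      have hsle : s ≤ S + 1 := by simpa [Nat.lt_succ_iff] using Finset.mem_range.mp hs
      have h1 : N - s = (N - 1 - s) + 1 := by omega
      have h2 : N - 1 - S = (N - 1 - (S+1)) + 1 := by omega
      rw [h1, h2, Nat.choose_succ_succ]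
      push_cast
      ring
    calc ∑ s ∈ Finset.range (S+2), (-1:ℚ)^s * (N.choose s) * ((N - 1 - s).choose (N - 1 - (S+1)))
        = (∑ s ∈ Finset.range (S+2), (-1:ℚ)^s * (N.choose s) * ((N - s).choose (N - 1 - S)))
          - ∑ s ∈ Finset.range (S+2), (-1:ℚ)^s * (N.choose s) * ((N - 1 - s).choose (N - 1 - S)) := by
          rw [← Finset.sum_sub_distrib]
          apply Finset.sum_congr rfl
          intro s hs
          rw [pascal s hs]
          ring
      _ = 0 - (-1:ℚ)^S := by
          congr 1
          · -- vanishing sum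
            have hterm : ∀ s ∈ Finset.range (S+2),
                (-1:ℚ)^s * (N.choose s) * ((N - s).choose (N - 1 - S))
                  = ((N.choose (S+1) : ℚ)) * ((-1:ℚ)^s * ((S+1).choose s)) := by
              intro s hs
              have hsle : s ≤ S + 1 := by simpa [Nat.lt_succ_iff] using Finset.mem_range.mp hs
              rw [show N - 1 - S = (N - s) - ((S+1) - s) by omega,
                Nat.choose_symm (by omega : S + 1 - s ≤ N - s)]
              have := subset_id N (S+1) s hsle (by omega)
              linear_combination (-1:ℚ)^s * this
            rw [Finset.sum_congr rfl hterm, ← Finset.mul_sum]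
            have : ∑ s ∈ Finset.range (S+2), (-1:ℚ)^s * ((S+1).choose s) = 0 := by
              have hz := Int.alternating_sum_range_choose_of_ne (by omega : S + 1 ≠ 0)
              have : ((∑ i ∈ Finset.range (S+1+1), (-1:ℤ)^i * ((S+1).choose i) : ℤ) : ℚ) = 0 := by
                rw [hz]; rfl
              push_cast at this
              convert this using 2
            rw [this]
            ring
          · -- the A(S) part
            rw [Finset.sum_range_succ]
            have hz : ((N - 1 - (S+1)).choose (N - 1 - S) : ℚ) = 0 := by
              rw [Nat.choose_eq_zero_of_lt (by omega)]
              rfl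
            rw [hz, ih (by omega)]
            ring
      _ = (-1:ℚ)^(S+1) := by ring

lemma neg_one_pow_sub (m s : ℕ) (h : s ≤ m) : (-1:ℚ)^(m - s) = (-1:ℚ)^m * (-1:ℚ)^s := by
  have h1 : (-1:ℚ)^(m-s) * (-1:ℚ)^s = (-1:ℚ)^m := by
    rw [← pow_add, show m - s + s = m by omega]
  have h2 : (-1:ℚ)^s * (-1:ℚ)^s = 1 := by
    rw [← pow_add, ← two_mul, pow_mul]
    norm_num
  calc (-1:ℚ)^(m-s) = (-1:ℚ)^(m-s) * ((-1:ℚ)^s * (-1:ℚ)^s) := by rw [h2]; ring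
    _ = (-1:ℚ)^m * (-1:ℚ)^s := by rw [← mul_assoc, h1]

lemma key_i (n m i : ℕ) (hm : 1 ≤ m) (hn : m + 1 ≤ n) (him : m + 1 ≤ i) (hi2 : i ≤ 2*m) :
    ∑ j ∈ Finset.range (m+1), (-1:ℚ)^j * ((n-1+j).choose (m+j)) * ((n+m).choose (m-j))
        * ((m+j).choose i)
      = (-1:ℚ)^m * ((-1:ℚ)^i * ((n - m - 1 + i).choose i)) := by
  rw [← Finset.sum_range_reflect]
  have hterm : ∀ s ∈ Finset.range (m+1),
      (-1:ℚ)^(m + 1 - 1 - s) * ((n-1+(m + 1 - 1 - s)).choose (m+(m + 1 - 1 - s)))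
          * ((n+m).choose (m-(m + 1 - 1 - s))) * ((m+(m + 1 - 1 - s)).choose i)
        = ((-1:ℚ)^m * ((n - m - 1 + i).choose i))
            * ((-1:ℚ)^s * ((n+m).choose s) * ((n + m - 1 - s).choose (n + m - 1 - (2*m - i)))) := by
    intro s hs
    have hsm : s ≤ m := by simpa [Nat.lt_succ_iff] using Finset.mem_range.mp hs
    have e1 : m + 1 - 1 - s = m - s := by omega
    have e2 : m - (m - s) = s := by omega
    have e3 : m + (m - s) = 2*m - s := by omega
    have e4 : n - 1 + (m - s) = n + m - 1 - s := by omega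
    rw [e1, e2, e3, e4, neg_one_pow_sub m s hsm]
    have htri := trinom (n - m - 1) (2*m - s) i
    have e5 : n - m - 1 + (2*m - s) = n + m - 1 - s := by omega
    have e6 : n - m - 1 + i = n + m - 1 - (2*m - i) := by omega
    rw [e5, e6] at htri
    calc (-1:ℚ)^m * (-1:ℚ)^s * ((n + m - 1 - s).choose (2*m - s)) * ((n+m).choose s)
          * ((2*m - s).choose i)
        = ((-1:ℚ)^m * (-1:ℚ)^s * ((n+m).choose s))
            * (((n + m - 1 - s).choose (2*m - s)) * ((2*m - s).choose i)) := by ring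
      _ = ((-1:ℚ)^m * (-1:ℚ)^s * ((n+m).choose s))
            * (((n + m - 1 - (2*m - i)).choose i) * ((n + m - 1 - s).choose (n + m - 1 - (2*m - i)))) := by
          rw [htri]
      _ = ((-1:ℚ)^m * ((n - m - 1 + i).choose i))
            * ((-1:ℚ)^s * ((n+m).choose s) * ((n + m - 1 - s).choose (n + m - 1 - (2*m - i)))) := by
          rw [e6]
          ring
  rw [Finset.sum_congr rfl hterm, ← Finset.mul_sum]
  have htrunc : ∑ s ∈ Finset.range (m+1),
      (-1:ℚ)^s * ((n+m).choose s) * ((n + m - 1 - s).choose (n + m - 1 - (2*m - i)))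
      = ∑ s ∈ Finset.range (2*m - i + 1),
      (-1:ℚ)^s * ((n+m).choose s) * ((n + m - 1 - s).choose (n + m - 1 - (2*m - i))) := by
    symm
    apply Finset.sum_subset
    · intro s hs
      simp only [Finset.mem_range] at hs ⊢
      omega
    · intro s hmem hs
      simp only [Finset.mem_range] at hs hmem
      have hlt : n + m - 1 - s < n + m - 1 - (2*m - i) := by omega
      rw [Nat.choose_eq_zero_of_lt hlt]
      ring
  rw [htrunc, altsum (n+m) (2*m - i) (by omega)]
  have hsgn : (-1:ℚ)^(2*m - i) = (-1:ℚ)^i := by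
    have h1 : (-1:ℚ)^(2*m - i) * (-1:ℚ)^i = 1 := by
      rw [← pow_add, show 2*m - i + i = 2*m by omega, pow_mul]
      norm_num
    have h2 : (-1:ℚ)^i * (-1:ℚ)^i = 1 := by
      rw [← pow_add, ← two_mul, pow_mul]
      norm_num
    calc (-1:ℚ)^(2*m-i) = (-1:ℚ)^(2*m-i) * ((-1:ℚ)^i * (-1:ℚ)^i) := by rw [h2]; ring
      _ = ((-1:ℚ)^(2*m-i) * (-1:ℚ)^i) * (-1:ℚ)^i := by ring
      _ = (-1:ℚ)^i := by rw [h1]; ring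
  rw [hsgn]
  ring

theorem gould_identity (n k : ℕ) (hkn : k ≤ n) :
    (S2 n k : ℤ) = (-1) ^ (n - k) *
      ∑ j ∈ Finset.range (n - k + 1), (-1 : ℤ) ^ j *
        ((n - 1 + j).choose (n - k + j)) * ((2 * n - k).choose (n - k - j)) *
        S1 (n - k + j) j := by
  rcases Nat.eq_or_lt_of_le hkn with heq | hlt
  · subst heq
    simp [Nat.sub_self, S2_self, S1_self]
  · rcases Nat.eq_zero_or_pos k with hk0 | hk1
    · subst hk0
      obtain ⟨p, rfl⟩ : ∃ p, n = p + 1 := ⟨n - 1, by omega⟩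
      rw [S2_zero]
      have hz : ∑ j ∈ Finset.range (p + 1 - 0 + 1), (-1 : ℤ) ^ j *
          ((p + 1 - 1 + j).choose (p + 1 - 0 + j)) * ((2 * (p+1) - 0).choose (p + 1 - 0 - j)) *
          S1 (p + 1 - 0 + j) j = 0 := by
        apply Finset.sum_eq_zero
        intro j _
        have : (p + 1 - 1 + j).choose (p + 1 - 0 + j) = 0 :=
          Nat.choose_eq_zero_of_lt (by omega)
        rw [this]
        push_cast
        ring
      rw [hz]
      simp
    · -- main case : 1 ≤ k ≤ n - 1
      set m := n - k with hmdef
      have hm1 : 1 ≤ m := by omega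
      have hmn : m + 1 ≤ n := by omega
      have hQ : ((S2 n k : ℚ)) = (-1:ℚ)^m * ∑ j ∈ Finset.range (m+1),
          (-1:ℚ)^j * ((n-1+j).choose (m+j)) * ((2*n-k).choose (m-j)) * (S1 (m+j) j : ℚ) := by
        have hS1g : ∀ j : ℕ, (S1 (m+j) j : ℚ) = g m ((m+j : ℕ) : ℤ) := by
          intro j
          rw [g_eq_S1 (m+j) m (by omega), show m + j - m = j by omega]
        have hS2g : (S2 n k : ℚ) = g m ((m:ℤ) - n) := by
          rw [g_eq_S2 n m (by omega), show n - m = k by omega]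
        have hnewton := newton (2*m+1) (g m) (dd_iter_g m)
        have hvan : ∀ i, i ≤ m → dd^[i] (g m) 0 = 0 := by
          intro i hi
          have h0 : ∀ r : ℕ, r ≤ i + (m - i) → g m (r : ℤ) = 0 := by
            intro r hr
            rcases Nat.lt_or_ge r m with h | h
            · exact g_nat_lt m r h
            · have hrm : r = m := by omega
              rw [hrm, g_eq_S1 m m le_rfl, Nat.sub_self]
              obtain ⟨p, hp⟩ : ∃ p, m = p + 1 := ⟨m-1, by omega⟩
              rw [hp, S1_zero]
              rfl
          have := dd_iter_vanish (m - i) i (g m) h0 0 (by omega)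
          simpa using this
        rw [hS2g, hnewton ((m:ℤ) - n)]
        have hRj : ∀ j ∈ Finset.range (m+1),
            (-1:ℚ)^j * ((n-1+j).choose (m+j)) * ((2*n-k).choose (m-j)) * (S1 (m+j) j : ℚ)
            = ∑ i ∈ Finset.range (2*m+1), dd^[i] (g m) 0 *
                ((-1:ℚ)^j * ((n-1+j).choose (m+j)) * ((n+m).choose (m-j)) * ((m+j).choose i)) := by
          intro j _
          rw [show 2*n - k = n + m by omega, hS1g j, hnewton ((m+j:ℕ):ℤ), Finset.mul_sum]
          apply Finset.sum_congr rfl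
          intro i _
          rw [bq_natCast (m+j) i]
          ring
        rw [Finset.sum_congr rfl hRj, Finset.sum_comm]
        have hper : ∀ i ∈ Finset.range (2*m+1),
            ∑ j ∈ Finset.range (m+1), dd^[i] (g m) 0 *
              ((-1:ℚ)^j * ((n-1+j).choose (m+j)) * ((n+m).choose (m-j)) * ((m+j).choose i))
            = (-1:ℚ)^m * (dd^[i] (g m) 0 * bq ((m:ℤ) - n) i) := by
          intro i hi
          rw [← Finset.mul_sum]
          rcases Nat.lt_or_ge m i with h | h
          · have hik : i ≤ 2*m := by
              simp only [Finset.mem_range] at hi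
              omega
            have hkey := key_i n m i hm1 hmn (by omega) hik
            rw [hkey]
            have hbq : bq ((m:ℤ) - n) i = (-1:ℚ)^i * ((n - m - 1 + i).choose i : ℚ) := by
              have harg : (m:ℤ) - n = -((n - m - 1 : ℕ) : ℤ) - 1 := by
                push_cast [Nat.cast_sub (show m ≤ n by omega),
                  Nat.cast_sub (show 1 ≤ n - m by omega)]
                ring
              rw [harg, bq_neg]
            rw [hbq]
            ring
          · rw [hvan i h]
            ring
        rw [Finset.sum_congr rfl hper, ← Finset.mul_sum, ← mul_assoc]
        have : (-1:ℚ)^m * (-1:ℚ)^m = 1 := by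
          rw [← pow_add, ← two_mul, pow_mul]
          norm_num
        rw [this, one_mul]
      have hcast : ((S2 n k : ℤ) : ℚ) = (((-1) ^ m *
          ∑ j ∈ Finset.range (m + 1), (-1 : ℤ) ^ j *
          ((n - 1 + j).choose (m + j)) * ((2 * n - k).choose (m - j)) *
          S1 (m + j) j : ℤ) : ℚ) := by
        push_cast
        convert hQ using 2
      exact_mod_cast hcast
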